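/- Let m ≥ 1, let A, B ∈ ℙ_m with det A = det B = 1, and let t ∈ ℝ be nonzero. Then the following are equivalent: (1) A^{-1} ∼ B; (2) A^{-1} # B = det(I + A B)^{-1/m} (A^{-1} + B); (3) A ♮_t B = det(I + A B)^{-2t/m} (A^{-1} + B)^t A (A^{-1} + B)^t. (Here det(I + A B) is a positive real number, since the eigenvalues of A B are positive, and real powers of it are taken in ℝ.) -/

import Mathlib

open Matrix
open scoped ComplexOrder

/-- Real power `A^t = exp(t · log A)` of a Hermitian positive definite matrix, defined via
the functional calculus (spectral decomposition). -/
noncomputable def mpow {n : ℕ} (A : Matrix (Fin n) (Fin n) ℂ) (t : ℝ) :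
    Matrix (Fin n) (Fin n) ℂ :=
  if hA : A.IsHermitian then
    (hA.eigenvectorUnitary : Matrix (Fin n) (Fin n) ℂ) *
      Matrix.diagonal (fun i => ((hA.eigenvalues i ^ t : ℝ) : ℂ)) *
      (star (hA.eigenvectorUnitary : Matrix (Fin n) (Fin n) ℂ))
  else A

/-- Logarithm of a Hermitian positive definite matrix via the functional calculus. -/
noncomputable def mlog {n : ℕ} (A : Matrix (Fin n) (Fin n) ℂ) : Matrix (Fin n) (Fin n) ℂ :=
  if hA : A.IsHermitian then
    (hA.eigenvectorUnitary : Matrix (Fin n) (Fin n) ℂ) *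
      Matrix.diagonal (fun i => ((Real.log (hA.eigenvalues i) : ℝ) : ℂ)) *
      (star (hA.eigenvectorUnitary : Matrix (Fin n) (Fin n) ℂ))
  else A

/-- Metric geometric mean `A # B = A^{1/2} (A^{-1/2} B A^{-1/2})^{1/2} A^{1/2}`. -/
noncomputable def geomMean {n : ℕ} (A B : Matrix (Fin n) (Fin n) ℂ) :
    Matrix (Fin n) (Fin n) ℂ :=
  mpow A (1/2) * mpow (mpow A (-(1/2)) * B * mpow A (-(1/2))) (1/2) * mpow A (1/2)

/-- Weighted spectral geometric mean `A ♮_t B = (A⁻¹ # B)^t A (A⁻¹ # B)^t`. -/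
noncomputable def spectralMean {n : ℕ} (t : ℝ) (A B : Matrix (Fin n) (Fin n) ℂ) :
    Matrix (Fin n) (Fin n) ℂ :=
  mpow (geomMean A⁻¹ B) t * A * mpow (geomMean A⁻¹ B) t

/-- The tolerance relation `A ∼ B`: there are `a, b > 0` with
`√(ab) = det(A⁻¹B)^{1/m}` and `σ(A⁻¹B) = {a, b}`. -/
def tolRel {m : ℕ} (A B : Matrix (Fin m) (Fin m) ℂ) : Prop :=
  ∃ a b : ℝ, 0 < a ∧ 0 < b ∧
    (Real.sqrt (a * b) : ℂ) = (A⁻¹ * B).det ^ ((1 : ℂ) / (m : ℂ)) ∧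
    spectrum ℂ (A⁻¹ * B) = {(a : ℂ), (b : ℂ)}

variable {n : ℕ}

lemma contOn (f : ℝ → ℝ) (A : Matrix (Fin n) (Fin n) ℂ) : ContinuousOn f (spectrum ℝ A) := by
  have : Finite (spectrum ℝ A) := A.finite_real_spectrum
  rw [continuousOn_iff_continuous_restrict]
  exact continuous_of_discreteTopology

lemma mpow_eq_cfc {A : Matrix (Fin n) (Fin n) ℂ} (hA : A.IsHermitian) (t : ℝ) :
    mpow A t = cfc (fun x : ℝ => x ^ t) A := by
  rw [mpow, dif_pos hA, Matrix.IsHermitian.cfc_eq, Matrix.IsHermitian.cfc]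
  rfl

lemma isSelfAdjoint_iff_isHermitian (A : Matrix (Fin n) (Fin n) ℂ) :
    IsSelfAdjoint A ↔ A.IsHermitian := Iff.rfl

lemma spec_pos {A : Matrix (Fin n) (Fin n) ℂ} (hA : A.PosDef) :
    ∀ x ∈ spectrum ℝ A, 0 < x := by
  rw [hA.1.spectrum_real_eq_range_eigenvalues]
  rintro x ⟨i, rfl⟩
  exact hA.eigenvalues_pos i

lemma posDef_conj {X N : Matrix (Fin n) (Fin n) ℂ} (hX : X.PosDef) (hN : IsUnit N.det) :
    (Nᴴ * X * N).PosDef := by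
  refine Matrix.PosDef.of_dotProduct_mulVec_pos (Matrix.isHermitian_conjTranspose_mul_mul N hX.1) fun x hx => ?_
  have hinj : Function.Injective N.mulVec :=
    Matrix.mulVec_injective_iff_isUnit.mpr ((Matrix.isUnit_iff_isUnit_det N).mpr hN)
  have h0 : N *ᵥ x ≠ 0 := fun h => hx (hinj (by simpa using h))
  have h := hX.dotProduct_mulVec_pos h0
  simpa only [star_mulVec, dotProduct_mulVec, vecMul_vecMul, ← Matrix.mul_assoc] using h

lemma cfc_posDef {A : Matrix (Fin n) (Fin n) ℂ} (hA : A.PosDef) {f : ℝ → ℝ}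
    (hf : ∀ x ∈ spectrum ℝ A, 0 < f x) : (cfc f A).PosDef := by
  rw [Matrix.IsHermitian.cfc_eq hA.1, Matrix.IsHermitian.cfc]
  have hU : IsUnit ((hA.1.eigenvectorUnitary : Matrix (Fin n) (Fin n) ℂ)).det := by
    apply Matrix.isUnit_iff_isUnit_det _ |>.mp
    exact (Unitary.toUnits hA.1.eigenvectorUnitary).isUnit
  have hD : (Matrix.diagonal
      (RCLike.ofReal ∘ f ∘ hA.1.eigenvalues : Fin n → ℂ)).PosDef := by
    rw [Matrix.posDef_diagonal_iff]
    intro i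
    have := hf _ (by
      rw [hA.1.spectrum_real_eq_range_eigenvalues]; exact ⟨i, rfl⟩)
    simpa [Function.comp, Complex.zero_lt_real] using this
  have h2 : IsUnit (star (hA.1.eigenvectorUnitary : Matrix (Fin n) (Fin n) ℂ)).det := by
    rw [Matrix.star_eq_conjTranspose, Matrix.det_conjTranspose]
    exact hU.star
  have := posDef_conj (N := star (hA.1.eigenvectorUnitary : Matrix (Fin n) (Fin n) ℂ)) hD h2
  simpa [Matrix.star_eq_conjTranspose, Matrix.conjTranspose_conjTranspose] using this

lemma mpow_posDef {A : Matrix (Fin n) (Fin n) ℂ} (hA : A.PosDef) (t : ℝ) :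
    (mpow A t).PosDef := by
  rw [mpow_eq_cfc hA.1]
  exact cfc_posDef hA fun x hx => Real.rpow_pos_of_pos (spec_pos hA x hx) t

lemma mpow_isHermitian {A : Matrix (Fin n) (Fin n) ℂ} (hA : A.IsHermitian) (t : ℝ) :
    (mpow A t).IsHermitian := by
  rw [mpow_eq_cfc hA t]
  exact cfc_predicate _ A

lemma mpow_mul_mpow {A : Matrix (Fin n) (Fin n) ℂ} (hA : A.PosDef) (s t : ℝ) :
    mpow A s * mpow A t = mpow A (s + t) := by
  rw [mpow_eq_cfc hA.1, mpow_eq_cfc hA.1, mpow_eq_cfc hA.1]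
  rw [← cfc_mul (fun x : ℝ => x ^ s) (fun x : ℝ => x ^ t) A (contOn _ _) (contOn _ _)]
  exact cfc_congr fun x hx => (Real.rpow_add (spec_pos hA x hx) s t).symm

lemma mpow_one {A : Matrix (Fin n) (Fin n) ℂ} (hA : A.IsHermitian) :
    mpow A 1 = A := by
  rw [mpow_eq_cfc hA]
  calc cfc (fun x : ℝ => x ^ (1:ℝ)) A = cfc (id : ℝ → ℝ) A :=
        cfc_congr fun x _ => Real.rpow_one x
    _ = A := cfc_id ℝ A hA

lemma mpow_zero {A : Matrix (Fin n) (Fin n) ℂ} (hA : A.IsHermitian) :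
    mpow A 0 = 1 := by
  rw [mpow_eq_cfc hA]
  calc cfc (fun x : ℝ => x ^ (0:ℝ)) A = cfc (fun _ : ℝ => (1:ℝ)) A :=
        cfc_congr fun x _ => Real.rpow_zero x
    _ = 1 := cfc_const_one ℝ A hA

lemma mpow_neg {A : Matrix (Fin n) (Fin n) ℂ} (hA : A.PosDef) (t : ℝ) :
    mpow A (-t) = (mpow A t)⁻¹ := by
  refine (Matrix.inv_eq_left_inv ?_).symm
  rw [mpow_mul_mpow hA, neg_add_cancel, mpow_zero hA.1]

lemma mpow_neg_one {A : Matrix (Fin n) (Fin n) ℂ} (hA : A.PosDef) :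
    mpow A (-1) = A⁻¹ := by
  rw [mpow_neg hA, mpow_one hA.1]

lemma mpow_mpow {A : Matrix (Fin n) (Fin n) ℂ} (hA : A.PosDef) (s t : ℝ) :
    mpow (mpow A s) t = mpow A (s * t) := by
  calc mpow (mpow A s) t
      = cfc (fun x : ℝ => x ^ t) (mpow A s) := mpow_eq_cfc (mpow_posDef hA s).1 t
    _ = cfc (fun x : ℝ => x ^ t) (cfc (fun x : ℝ => x ^ s) A) := by
        rw [mpow_eq_cfc hA.1 s]
    _ = cfc (fun x : ℝ => (x ^ s) ^ t) A :=
        (cfc_comp' (fun x : ℝ => x ^ t) (fun x : ℝ => x ^ s) A (by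
          rw [continuousOn_iff_continuous_restrict]
          have : Finite ((fun x : ℝ => x ^ s) '' spectrum ℝ A) :=
            Set.Finite.image _ Matrix.finite_real_spectrum
          exact continuous_of_discreteTopology) (contOn _ _) hA.1.isSelfAdjoint).symm
    _ = cfc (fun x : ℝ => x ^ (s * t)) A :=
        cfc_congr fun x hx => (Real.rpow_mul (spec_pos hA x hx).le s t).symm
    _ = mpow A (s * t) := (mpow_eq_cfc hA.1 _).symm

lemma mpow_inv {A : Matrix (Fin n) (Fin n) ℂ} (hA : A.PosDef) (t : ℝ) :
    mpow A⁻¹ t = mpow A (-t) := by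
  rw [← mpow_neg_one hA, mpow_mpow hA, neg_one_mul]

lemma mpow_injective {A B : Matrix (Fin n) (Fin n) ℂ} (hA : A.PosDef) (hB : B.PosDef)
    {t : ℝ} (ht : t ≠ 0) (h : mpow A t = mpow B t) : A = B := by
  have := congrArg (fun M => mpow M (1/t)) h
  simpa [mpow_mpow hA, mpow_mpow hB, mul_one_div, div_self ht, mul_inv_cancel₀ ht,
    mpow_one hA.1, mpow_one hB.1] using this

lemma mpow_smul {A : Matrix (Fin n) (Fin n) ℂ} (hA : A.PosDef) {c : ℝ} (hc : 0 < c) (t : ℝ) :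
    mpow (c • A) t = (c ^ t) • mpow A t := by
  have hcA : (c • A).PosDef := by
    refine Matrix.PosDef.of_dotProduct_mulVec_pos ?_ fun x hx => ?_
    · show (c • A)ᴴ = c • A
      rw [Matrix.conjTranspose_smul, star_trivial, hA.1.eq]
    · have h := hA.dotProduct_mulVec_pos hx
      have heq : (c • A) *ᵥ x = c • (A *ᵥ x) := Matrix.smul_mulVec c A x
      rw [heq, dotProduct_smul]
      have hlt : (0:ℂ) < (c : ℂ) * dotProduct (star x) (A *ᵥ x) :=
        mul_pos (by exact_mod_cast hc) h
      simpa [Complex.real_smul] using hlt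
  have h1 : cfc (fun x : ℝ => c * x) A = c • A := cfc_const_mul_id c A hA.1.isSelfAdjoint
  calc mpow (c • A) t
      = cfc (fun x : ℝ => x ^ t) (c • A) := mpow_eq_cfc hcA.1 t
    _ = cfc (fun x : ℝ => x ^ t) (cfc (fun x : ℝ => c * x) A) := by rw [h1]
    _ = cfc (fun x : ℝ => (c * x) ^ t) A :=
        (cfc_comp' (fun x : ℝ => x ^ t) (fun x : ℝ => c * x) A (by
          rw [continuousOn_iff_continuous_restrict]
          have : Finite ((fun x : ℝ => c * x) '' spectrum ℝ A) :=
            Set.Finite.image _ Matrix.finite_real_spectrum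
          exact continuous_of_discreteTopology) (contOn _ _) hA.1.isSelfAdjoint).symm
    _ = cfc (fun x : ℝ => c ^ t * x ^ t) A :=
        cfc_congr fun x hx => Real.mul_rpow hc.le (spec_pos hA x hx).le
    _ = (c ^ t) • cfc (fun x : ℝ => x ^ t) A :=
        cfc_const_mul (c ^ t) (fun x : ℝ => x ^ t) A (contOn _ _)
    _ = (c ^ t) • mpow A t := by rw [mpow_eq_cfc hA.1]

lemma posDef_conj' {X N : Matrix (Fin n) (Fin n) ℂ} (hX : X.PosDef) (hN : N.PosDef) :
    (N * X * N).PosDef := by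
  have hdet : IsUnit N.det := isUnit_iff_ne_zero.mpr hN.det_pos.ne'
  have := posDef_conj (N := N) hX hdet
  rwa [hN.1.eq] at this

lemma posDef_smul {A : Matrix (Fin n) (Fin n) ℂ} (hA : A.PosDef) {c : ℝ} (hc : 0 < c) :
    (c • A).PosDef := by
  refine Matrix.PosDef.of_dotProduct_mulVec_pos ?_ fun x hx => ?_
  · show (c • A)ᴴ = c • A
    rw [Matrix.conjTranspose_smul, star_trivial, hA.1.eq]
  · have h := hA.dotProduct_mulVec_pos hx
    have heq : (c • A) *ᵥ x = c • (A *ᵥ x) := Matrix.smul_mulVec c A x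
    rw [heq, dotProduct_smul]
    have hlt : (0:ℂ) < (c : ℂ) * dotProduct (star x) (A *ᵥ x) :=
      mul_pos (by exact_mod_cast hc) h
    simpa [Complex.real_smul] using hlt

lemma conj_cancel {R : Matrix (Fin n) (Fin n) ℂ} (X : Matrix (Fin n) (Fin n) ℂ)
    (h : IsUnit R.det) : R⁻¹ * (R * X * R) * R⁻¹ = X := by
  have : R⁻¹ * (R * X * R) * R⁻¹ = (R⁻¹ * R) * X * (R * R⁻¹) := by noncomm_ring
  rw [this, Matrix.nonsing_inv_mul _ h, Matrix.mul_nonsing_inv _ h, one_mul, mul_one]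

lemma mpow_sq_half {M : Matrix (Fin n) (Fin n) ℂ} (hM : M.PosDef) :
    mpow (M * M) (1/2) = M := by
  have h2 : M * M = mpow M (2:ℝ) := by
    conv_lhs => rw [← mpow_one hM.1]
    rw [mpow_mul_mpow hM]
    norm_num
  have h3 : (2:ℝ) * (1/2) = 1 := by norm_num
  rw [h2, mpow_mpow hM, h3, mpow_one hM.1]

lemma riccati_unique {A X Y : Matrix (Fin n) (Fin n) ℂ} (hA : A.PosDef) (hX : X.PosDef)
    (hY : Y.PosDef) (h : X * A * X = Y * A * Y) : X = Y := by
  set R := mpow A (1/2) with hR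
  have hRpd : R.PosDef := mpow_posDef hA _
  have hRdet : IsUnit R.det := isUnit_iff_ne_zero.mpr hRpd.det_pos.ne'
  have hhalf : (1/2 + 1/2 : ℝ) = 1 := by norm_num
  have hRR : R * R = A := by
    rw [hR, mpow_mul_mpow hA, hhalf, mpow_one hA.1]
  have hM : (R * X * R).PosDef := posDef_conj' hX hRpd
  have hN : (R * Y * R).PosDef := posDef_conj' hY hRpd
  have e1 : ∀ Z : Matrix (Fin n) (Fin n) ℂ,
      (R * Z * R) * (R * Z * R) = R * (Z * A * Z) * R := fun Z => by
    rw [← hRR]; noncomm_ring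
  have hsq : (R * X * R) * (R * X * R) = (R * Y * R) * (R * Y * R) := by
    rw [e1, e1, h]
  have hMN : R * X * R = R * Y * R := by
    rw [← mpow_sq_half hM, hsq, mpow_sq_half hN]
  have := congrArg (fun Z => R⁻¹ * Z * R⁻¹) hMN
  simpa only [conj_cancel _ hRdet] using this

lemma det_cfc {A : Matrix (Fin n) (Fin n) ℂ} (hA : A.IsHermitian) (f : ℝ → ℝ) :
    (cfc f A).det = ∏ i, ((f (hA.eigenvalues i) : ℝ) : ℂ) := by
  rw [Matrix.IsHermitian.cfc_eq hA, Matrix.IsHermitian.cfc, Unitary.conjStarAlgAut_apply, Matrix.det_mul_right_comm]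
  simp [Matrix.det_diagonal]

lemma spectrum_complex {A : Matrix (Fin n) (Fin n) ℂ} (hA : A.IsHermitian) :
    spectrum ℂ A = Set.range (fun i => ((hA.eigenvalues i : ℝ) : ℂ)) := by
  rw [hA.spectrum_eq_image_range, ← Set.range_comp]
  rfl

lemma one_add_cfc {A : Matrix (Fin n) (Fin n) ℂ} (hA : A.IsHermitian) :
    cfc (fun x : ℝ => 1 + x) A = 1 + A := by
  calc cfc (fun x : ℝ => 1 + x) A
      = cfc (fun x : ℝ => 1 + id x) A := rfl
    _ = algebraMap ℝ _ 1 + cfc (id : ℝ → ℝ) A :=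
        cfc_const_add 1 id A (contOn _ _) hA.isSelfAdjoint
    _ = 1 + A := by rw [_root_.map_one, cfc_id ℝ A hA.isSelfAdjoint]

lemma det_one_add {A : Matrix (Fin n) (Fin n) ℂ} (hA : A.IsHermitian) :
    (1 + A).det = ∏ i, ((1 + hA.eigenvalues i : ℝ) : ℂ) := by
  rw [← one_add_cfc hA, det_cfc hA]

lemma smul_one_add_cfc {A : Matrix (Fin n) (Fin n) ℂ} (hA : A.IsHermitian) (r : ℝ) :
    cfc (fun x : ℝ => r * (1 + x)) A = r • (1 + A) := by
  calc cfc (fun x : ℝ => r * (1 + x)) A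
      = r • cfc (fun x : ℝ => 1 + x) A := cfc_const_mul r _ A (contOn _ _)
    _ = r • (1 + A) := by rw [one_add_cfc hA]

lemma two_sol {c s u : ℝ} (hs : 0 < s) (hu : 0 < u) (h1 : s + s⁻¹ = c) (h2 : u + u⁻¹ = c) :
    s = u ∨ s * u = 1 := by
  have heq : s + s⁻¹ = u + u⁻¹ := by rw [h1, h2]
  have key : (s - u) * (s * u - 1) = 0 := by
    have h3 : (s - u) * (s * u - 1) = (s * u) * ((s + s⁻¹) - (u + u⁻¹)) := by
      field_simp; ring
    rw [h3, heq, sub_self, mul_zero]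
  rcases mul_eq_zero.mp key with h | h
  · left; linarith
  · right; linarith

lemma half_identity {a : ℝ} (ha : 0 < a) :
    (a⁻¹) ^ ((1:ℝ)/2) = a ^ ((1:ℝ)/2) / (1 + a) * (1 + a⁻¹) := by
  have hs : 0 < a ^ ((1:ℝ)/2) := Real.rpow_pos_of_pos ha _
  have hsq : a ^ ((1:ℝ)/2) * a ^ ((1:ℝ)/2) = a := by
    rw [← Real.rpow_add ha]; norm_num
  have e : a ^ ((1:ℝ)/2) * (a ^ ((1:ℝ)/2) * (1 + a⁻¹)) =
      a ^ ((1:ℝ)/2) * ((a ^ ((1:ℝ)/2))⁻¹ * (1 + a)) := by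
    rw [← mul_assoc, hsq, ← mul_assoc, mul_inv_cancel₀ hs.ne', one_mul, mul_add, mul_one,
      mul_inv_cancel₀ ha.ne']
    ring
  have e2 := mul_left_cancel₀ hs.ne' e
  rw [Real.inv_rpow ha.le, div_mul_eq_mul_div, eq_comm,
    div_eq_iff (ne_of_gt (by linarith : (0:ℝ) < 1 + a))]
  rw [e2]

lemma real_key {m : ℕ} (hm : 1 ≤ m) (μ : Fin m → ℝ) (hpos : ∀ i, 0 < μ i)
    (hprod : ∏ i, μ i = 1) :
    ((∃ a b : ℝ, 0 < a ∧ 0 < b ∧ a * b = 1 ∧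
        (Set.range fun i => ((μ i : ℝ) : ℂ)) = {((a : ℝ) : ℂ), ((b : ℝ) : ℂ)}) ↔
      ∀ i, μ i ^ ((1:ℝ)/2) = (∏ j, (1 + μ j)) ^ (-(1:ℝ)/m) * (1 + μ i)) := by
  have hm0 : (m : ℝ) ≠ 0 := Nat.cast_ne_zero.mpr (by omega)
  set d := ∏ j, (1 + μ j) with hd
  have hdpos : 0 < d := Finset.prod_pos fun j _ => by have := hpos j; linarith
  constructor
  · rintro ⟨a, b, ha, hb, hab, hset⟩
    have hmem : ∀ i, μ i = a ∨ μ i = b := by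
      intro i
      have hmm : ((μ i : ℝ) : ℂ) ∈ ({((a : ℝ) : ℂ), ((b : ℝ) : ℂ)} : Set ℂ) := by
        rw [← hset]; exact ⟨i, rfl⟩
      simp only [Set.mem_insert_iff, Set.mem_singleton_iff] at hmm
      rcases hmm with h | h
      · left; exact_mod_cast h
      · right; exact_mod_cast h
    have h1a : (0:ℝ) < 1 + a := by linarith
    set c := a ^ ((1:ℝ)/2) / (1 + a) with hc
    have hcpos : 0 < c := div_pos (Real.rpow_pos_of_pos ha _) h1a
    have hbol : b = a⁻¹ := by
      field_simp
      linear_combination hab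
    have hsq : a ^ ((1:ℝ)/2) * a ^ ((1:ℝ)/2) = a := by
      rw [← Real.rpow_add ha]; norm_num
    have hkey : ∀ i, μ i ^ ((1:ℝ)/2) = c * (1 + μ i) := by
      intro i
      rcases hmem i with h | h
      · rw [h, hc]; field_simp
      · rw [h, hbol, hc]
        exact half_identity ha
    have hceq : d = (c ^ m)⁻¹ := by
      have : ∀ j, 1 + μ j = μ j ^ ((1:ℝ)/2) / c := by
        intro j; rw [hkey j]; field_simp
      rw [hd]
      calc ∏ j, (1 + μ j) = ∏ j, (μ j ^ ((1:ℝ)/2) / c) := by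
            exact Finset.prod_congr rfl fun j _ => this j
        _ = (∏ j, μ j ^ ((1:ℝ)/2)) / c ^ m := by
            rw [Finset.prod_div_distrib, Finset.prod_const, Finset.card_univ, Fintype.card_fin]
        _ = ((∏ j, μ j) ^ ((1:ℝ)/2)) / c ^ m := by
            rw [Real.finset_prod_rpow _ _ fun j _ => (hpos j).le]
        _ = (c ^ m)⁻¹ := by rw [hprod, Real.one_rpow, one_div]
    have hrc : d ^ (-(1:ℝ)/m) = c := by
      rw [hceq, ← Real.rpow_natCast c m, ← Real.rpow_neg hcpos.le, ← Real.rpow_mul hcpos.le]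
      rw [show -(m:ℝ) * (-(1:ℝ)/m) = 1 by field_simp]
      exact Real.rpow_one c
    intro i
    rw [hrc]; exact hkey i
  · intro h
    set c := d ^ (-(1:ℝ)/m) with hc
    have hcpos : 0 < c := Real.rpow_pos_of_pos hdpos _
    have hsum : ∀ i, μ i ^ ((1:ℝ)/2) + (μ i ^ ((1:ℝ)/2))⁻¹ = c⁻¹ := by
      intro i
      have hsi : 0 < μ i ^ ((1:ℝ)/2) := Real.rpow_pos_of_pos (hpos i) _
      have hsq : μ i ^ ((1:ℝ)/2) * μ i ^ ((1:ℝ)/2) = μ i := by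
        rw [← Real.rpow_add (hpos i)]; norm_num
      have := h i
      field_simp
      nlinarith [this, hsq, hsi, hcpos]
    have hpair : ∀ i j, μ i = μ j ∨ μ i * μ j = 1 := by
      intro i j
      have hsi : 0 < μ i ^ ((1:ℝ)/2) := Real.rpow_pos_of_pos (hpos i) _
      have hsj : 0 < μ j ^ ((1:ℝ)/2) := Real.rpow_pos_of_pos (hpos j) _
      have hsqi : μ i ^ ((1:ℝ)/2) * μ i ^ ((1:ℝ)/2) = μ i := by
        rw [← Real.rpow_add (hpos i)]; norm_num
      have hsqj : μ j ^ ((1:ℝ)/2) * μ j ^ ((1:ℝ)/2) = μ j := by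
        rw [← Real.rpow_add (hpos j)]; norm_num
      rcases two_sol hsi hsj (hsum i) (hsum j) with heq | hmul
      · left; rw [← hsqi, ← hsqj, heq]
      · right; nlinarith [hmul]
    set i0 : Fin m := ⟨0, by omega⟩ with hi0
    by_cases hall : ∀ i, μ i = μ i0
    · refine ⟨1, 1, one_pos, one_pos, one_mul 1, ?_⟩
      have hone : μ i0 = 1 := by
        have hp : μ i0 ^ m = 1 := by
          rw [← hprod]
          rw [Finset.prod_congr rfl fun j _ => hall j, Finset.prod_const, Finset.card_univ,
            Fintype.card_fin]
        rcases lt_trichotomy (μ i0) 1 with hlt | heq | hgt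
        · exfalso
          have hlt2 : μ i0 ^ m < 1 := pow_lt_one₀ (hpos i0).le hlt (by omega)
          rw [hp] at hlt2; exact lt_irrefl 1 hlt2
        · exact heq
        · exfalso
          have hgt2 : 1 < μ i0 ^ m := one_lt_pow₀ hgt (by omega)
          rw [hp] at hgt2; exact lt_irrefl 1 hgt2
      ext z
      simp only [Set.mem_range, Set.mem_insert_iff, Set.mem_singleton_iff, or_self]
      constructor
      · rintro ⟨i, rfl⟩
        rw [hall i, hone]
      · rintro rfl
        exact ⟨i0, by rw [hone]⟩
    · push_neg at hall
      obtain ⟨j, hj⟩ := hall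
      have hab : μ i0 * μ j = 1 := by
        rcases hpair i0 j with h1 | h1
        · exact absurd h1.symm hj
        · exact h1
      refine ⟨μ i0, μ j, hpos i0, hpos j, hab, ?_⟩
      ext z
      simp only [Set.mem_range, Set.mem_insert_iff, Set.mem_singleton_iff]
      constructor
      · rintro ⟨i, rfl⟩
        rcases hpair i i0 with h1 | h1
        · left; exact_mod_cast congrArg (fun x : ℝ => (x : ℂ)) h1
        · right
          have hij : μ i = μ j := by
            have h2 : μ i * μ i0 = μ j * μ i0 := by rw [h1, ← hab]; ring
            exact mul_right_cancel₀ (hpos i0).ne' h2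
          exact_mod_cast congrArg (fun x : ℝ => (x : ℂ)) hij
      · rintro (rfl | rfl)
        · exact ⟨i0, rfl⟩
        · exact ⟨j, rfl⟩

theorem tolRel_iff_geomMean_iff_spectralMean {m : ℕ} (hm : 1 ≤ m)
    (A B : Matrix (Fin m) (Fin m) ℂ) (hA : A.PosDef) (hB : B.PosDef)
    (hdetA : A.det = 1) (hdetB : B.det = 1) (t : ℝ) (ht : t ≠ 0) :
    (tolRel A⁻¹ B ↔
      geomMean A⁻¹ B = ((1 + A * B).det.re ^ (-(1 : ℝ) / m)) • (A⁻¹ + B)) ∧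
    (tolRel A⁻¹ B ↔
      spectralMean t A B = ((1 + A * B).det.re ^ (-(2 * t) / m)) •
        (mpow (A⁻¹ + B) t * A * mpow (A⁻¹ + B) t)) := by
  classical
  have hm0 : (m:ℝ) ≠ 0 := Nat.cast_ne_zero.mpr (by omega)
  have hAdet : IsUnit A.det := isUnit_iff_ne_zero.mpr (by rw [hdetA]; exact one_ne_zero)
  have hRpd : (mpow A (1/2)).PosDef := mpow_posDef hA _
  have hRdet : IsUnit (mpow A (1/2)).det := isUnit_iff_ne_zero.mpr hRpd.det_pos.ne'
  have hRR : mpow A (1/2) * mpow A (1/2) = A := by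
    rw [mpow_mul_mpow hA, show (1/2 + 1/2 : ℝ) = 1 by norm_num, mpow_one hA.1]
  have hRinvpd : (mpow A (-(1/2))).PosDef := mpow_posDef hA _
  have hRinvdet : IsUnit (mpow A (-(1/2))).det := isUnit_iff_ne_zero.mpr hRinvpd.det_pos.ne'
  have hRRinv : mpow A (1/2) * mpow A (-(1/2)) = 1 := by
    rw [mpow_mul_mpow hA, show (1/2 + -(1/2) : ℝ) = 0 by norm_num, mpow_zero hA.1]
  have hRinvR : mpow A (-(1/2)) * mpow A (1/2) = 1 := by
    rw [mpow_mul_mpow hA, show (-(1/2) + 1/2 : ℝ) = 0 by norm_num, mpow_zero hA.1]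
  have hRinvRinv : mpow A (-(1/2)) * mpow A (-(1/2)) = A⁻¹ := by
    rw [mpow_mul_mpow hA, show (-(1/2) + -(1/2) : ℝ) = -1 by norm_num, mpow_neg_one hA]
  have hRinv : mpow A (-(1/2)) = (mpow A (1/2))⁻¹ := mpow_neg hA _
  have hCpd : (mpow A (1/2) * B * mpow A (1/2)).PosDef := posDef_conj' hB hRpd
  set μ : Fin m → ℝ := hCpd.1.eigenvalues with hμdef
  have hμpos : ∀ i, 0 < μ i := fun i => hCpd.eigenvalues_pos i
  have hdetC : (mpow A (1/2) * B * mpow A (1/2)).det = 1 := by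
    rw [Matrix.det_mul, Matrix.det_mul]
    have e : (mpow A (1/2)).det * B.det * (mpow A (1/2)).det
        = ((mpow A (1/2)).det * (mpow A (1/2)).det) * B.det := by ring
    rw [e, ← Matrix.det_mul, hRR, hdetA, hdetB, one_mul]
  have hprodμC : (∏ i, ((μ i : ℝ) : ℂ)) = 1 :=
    (Matrix.IsHermitian.det_eq_prod_eigenvalues hCpd.1).symm.trans hdetC
  have hprodμ : ∏ i, μ i = 1 := by
    have h2 : ((∏ i, μ i : ℝ) : ℂ) = ((1:ℝ) : ℂ) := by
      push_cast
      exact hprodμC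
    exact_mod_cast h2
  set d : ℝ := ∏ i, (1 + μ i) with hddef
  have hdpos : 0 < d := Finset.prod_pos fun i _ => by have := hμpos i; linarith
  have hAB : A * B = mpow A (1/2) * (mpow A (1/2) * B * mpow A (1/2)) * (mpow A (1/2))⁻¹ := by
    have e : mpow A (1/2) * (mpow A (1/2) * B * mpow A (1/2)) * (mpow A (1/2))⁻¹
        = (mpow A (1/2) * mpow A (1/2)) * B * (mpow A (1/2) * (mpow A (1/2))⁻¹) := by
      noncomm_ring
    rw [e, hRR, Matrix.mul_nonsing_inv _ hRdet, Matrix.mul_one]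
  have h1AB : 1 + A * B
      = mpow A (1/2) * (1 + mpow A (1/2) * B * mpow A (1/2)) * (mpow A (1/2))⁻¹ := by
    rw [Matrix.mul_add (mpow A (1/2)) 1 (mpow A (1/2) * B * mpow A (1/2)), Matrix.mul_one,
      Matrix.add_mul, Matrix.mul_nonsing_inv _ hRdet, hAB]
  have hdet1AB : (1 + A * B).det = ((d : ℝ) : ℂ) := by
    rw [h1AB, Matrix.det_mul, Matrix.det_mul]
    have e : (mpow A (1/2)).det * (1 + mpow A (1/2) * B * mpow A (1/2)).det
          * ((mpow A (1/2))⁻¹).det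
        = (1 + mpow A (1/2) * B * mpow A (1/2)).det
          * ((mpow A (1/2)).det * ((mpow A (1/2))⁻¹).det) := by ring
    rw [e, ← Matrix.det_mul, Matrix.mul_nonsing_inv _ hRdet, Matrix.det_one, mul_one]
    rw [det_one_add hCpd.1, hddef]
    push_cast
    rfl
  have hdre : (1 + A * B).det.re = d := by rw [hdet1AB, Complex.ofReal_re]
  have hspecAB : spectrum ℂ (A * B) = Set.range (fun i => ((μ i : ℝ) : ℂ)) := by
    rw [hAB]
    have hu : IsUnit (mpow A (1/2)) := (Matrix.isUnit_iff_isUnit_det _).mpr hRdet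
    have hconj : mpow A (1/2) * (mpow A (1/2) * B * mpow A (1/2)) * (mpow A (1/2))⁻¹
        = (hu.unit : Matrix (Fin m) (Fin m) ℂ) * (mpow A (1/2) * B * mpow A (1/2))
          * ((hu.unit⁻¹ : (Matrix (Fin m) (Fin m) ℂ)ˣ) : Matrix (Fin m) (Fin m) ℂ) := by
      rw [Matrix.coe_units_inv, hu.unit_spec]
    rw [hconj, spectrum.units_conjugate]
    exact spectrum_complex hCpd.1
  have hAinvinv : A⁻¹⁻¹ = A := Matrix.nonsing_inv_nonsing_inv A hAdet
  have hdetAB : (A * B).det = 1 := by rw [Matrix.det_mul, hdetA, hdetB, one_mul]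
  have htol : tolRel A⁻¹ B ↔ ∃ a b : ℝ, 0 < a ∧ 0 < b ∧ a * b = 1 ∧
      (Set.range fun i => ((μ i : ℝ) : ℂ)) = {((a:ℝ):ℂ), ((b:ℝ):ℂ)} := by
    unfold tolRel
    rw [hAinvinv, hdetAB, hspecAB, Complex.one_cpow]
    constructor
    · rintro ⟨a, b, ha, hb, h1, h2⟩
      refine ⟨a, b, ha, hb, ?_, h2⟩
      have h1' : Real.sqrt (a * b) = 1 := by exact_mod_cast h1
      have := Real.sqrt_eq_one.mp h1'
      exact this
    · rintro ⟨a, b, ha, hb, h1, h2⟩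
      refine ⟨a, b, ha, hb, ?_, h2⟩
      rw [h1, Real.sqrt_one]
      norm_num
  -- geometric mean computation
  have hG : geomMean A⁻¹ B = mpow A (-(1/2))
      * mpow (mpow A (1/2) * B * mpow A (1/2)) (1/2) * mpow A (-(1/2))  := by
    unfold geomMean
    rw [mpow_inv hA (1/2), mpow_inv hA (-(1/2)), neg_neg]
  have hS : mpow A (-(1/2)) * (1 + mpow A (1/2) * B * mpow A (1/2)) * mpow A (-(1/2))
      = A⁻¹ + B := by
    have e : mpow A (-(1/2)) * (1 + mpow A (1/2) * B * mpow A (1/2)) * mpow A (-(1/2))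
        = mpow A (-(1/2)) * mpow A (-(1/2))
          + (mpow A (-(1/2)) * mpow A (1/2)) * B * (mpow A (1/2) * mpow A (-(1/2))) := by
      noncomm_ring
    rw [e, hRinvR, hRRinv, hRinvRinv, Matrix.one_mul, Matrix.mul_one]
  have hconj_inj : ∀ X Y : Matrix (Fin m) (Fin m) ℂ,
      mpow A (-(1/2)) * X * mpow A (-(1/2)) = mpow A (-(1/2)) * Y * mpow A (-(1/2))
      → X = Y := by
    intro X Y h
    have := congrArg (fun Z => (mpow A (-(1/2)))⁻¹ * Z * (mpow A (-(1/2)))⁻¹) h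
    simpa only [conj_cancel _ hRinvdet] using this
  have hsmulmul : ∀ (c : ℝ) (X : Matrix (Fin m) (Fin m) ℂ),
      c • (mpow A (-(1/2)) * X * mpow A (-(1/2)))
      = mpow A (-(1/2)) * (c • X) * mpow A (-(1/2)) := by
    intro c X
    rw [mul_smul_comm, smul_mul_assoc]
  -- the eigenvalue characterization of condition (2)
  have hE2 : ∀ r : ℝ, (geomMean A⁻¹ B = r • (A⁻¹ + B))
      ↔ ∀ i, μ i ^ ((1:ℝ)/2) = r * (1 + μ i) := by
    intro r
    rw [hG, ← hS, hsmulmul]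
    constructor
    · intro h
      have hmain := hconj_inj _ _ h
      have hcfc : cfc (fun x : ℝ => x ^ ((1:ℝ)/2)) (mpow A (1/2) * B * mpow A (1/2))
          = cfc (fun x : ℝ => r * (1 + x)) (mpow A (1/2) * B * mpow A (1/2)) := by
        rw [← mpow_eq_cfc hCpd.1]
        calc mpow (mpow A (1/2) * B * mpow A (1/2)) (1/2)
            = r • (1 + mpow A (1/2) * B * mpow A (1/2)) := hmain
          _ = cfc (fun x : ℝ => r * (1 + x)) (mpow A (1/2) * B * mpow A (1/2)) :=
              (smul_one_add_cfc hCpd.1 r).symm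
      have heqOn := eqOn_of_cfc_eq_cfc hcfc (contOn _ _) (contOn _ _) hCpd.1.isSelfAdjoint
      intro i
      apply heqOn
      rw [hCpd.1.spectrum_real_eq_range_eigenvalues]
      exact ⟨i, rfl⟩
    · intro h
      have hcfc : cfc (fun x : ℝ => x ^ ((1:ℝ)/2)) (mpow A (1/2) * B * mpow A (1/2))
          = cfc (fun x : ℝ => r * (1 + x)) (mpow A (1/2) * B * mpow A (1/2)) := by
        apply cfc_congr
        rw [hCpd.1.spectrum_real_eq_range_eigenvalues]
        rintro x ⟨i, rfl⟩
        exact h i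
      have hmain2 : mpow (mpow A (1/2) * B * mpow A (1/2)) (1/2)
          = r • (1 + mpow A (1/2) * B * mpow A (1/2)) :=
        calc mpow (mpow A (1/2) * B * mpow A (1/2)) (1/2)
            = cfc (fun x : ℝ => x ^ ((1:ℝ)/2)) (mpow A (1/2) * B * mpow A (1/2)) :=
              mpow_eq_cfc hCpd.1 _
          _ = cfc (fun x : ℝ => r * (1 + x)) (mpow A (1/2) * B * mpow A (1/2)) := hcfc
          _ = r • (1 + mpow A (1/2) * B * mpow A (1/2)) := smul_one_add_cfc hCpd.1 r
      rw [hmain2]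
  -- first equivalence
  have hrd : (1 + A * B).det.re ^ (-(1:ℝ)/m) = d ^ (-(1:ℝ)/m) := by rw [hdre]
  have Iff1 : tolRel A⁻¹ B ↔ geomMean A⁻¹ B
      = ((1 + A * B).det.re ^ (-(1:ℝ)/m)) • (A⁻¹ + B) := by
    rw [htol, hE2 ((1 + A * B).det.re ^ (-(1:ℝ)/m)), hrd, hddef]
    exact real_key hm μ hμpos hprodμ
  refine ⟨Iff1, Iff1.trans ?_⟩
  -- second equivalence: condition (2) ↔ condition (3)
  have hSpd : (A⁻¹ + B).PosDef := hA.inv.add hB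
  have hrpos : 0 < d ^ (-(1:ℝ)/m) := Real.rpow_pos_of_pos hdpos _
  have hrSpd : ((d ^ (-(1:ℝ)/m)) • (A⁻¹ + B)).PosDef := posDef_smul hSpd hrpos
  have hGpd : (geomMean A⁻¹ B).PosDef := by
    rw [hG]
    exact posDef_conj' (mpow_posDef hCpd _) hRinvpd
  have hscal : d ^ (-(2*t)/m) = d ^ (-(1:ℝ)/m * t) * d ^ (-(1:ℝ)/m * t) := by
    rw [← Real.rpow_add hdpos]
    congr 1
    field_simp
    ring
  have hRHS2 : ((1 + A * B).det.re ^ (-(2*t)/m)) • (mpow (A⁻¹ + B) t * A * mpow (A⁻¹ + B) t)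
      = mpow ((d ^ (-(1:ℝ)/m)) • (A⁻¹ + B)) t * A * mpow ((d ^ (-(1:ℝ)/m)) • (A⁻¹ + B)) t := by
    have hsc2 : (d ^ (-(1:ℝ)/m)) ^ t = d ^ (-(1:ℝ)/m * t) :=
      (Real.rpow_mul hdpos.le _ _).symm
    rw [mpow_smul hSpd hrpos t, hdre, hsc2]
    rw [smul_mul_assoc, smul_mul_assoc, mul_smul_comm, smul_smul, hscal]
  constructor
  · intro h2
    unfold spectralMean
    rw [hRHS2, h2, hrd]
  · intro h3
    unfold spectralMean at h3
    rw [hRHS2] at h3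
    have hZpd : (mpow (geomMean A⁻¹ B) t).PosDef := mpow_posDef hGpd t
    have hWpd : (mpow ((d ^ (-(1:ℝ)/m)) • (A⁻¹ + B)) t).PosDef := mpow_posDef hrSpd t
    have hZW := riccati_unique hA hZpd hWpd h3
    have := mpow_injective hGpd hrSpd ht hZW
    rw [this, hrd]
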